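/- Let K : ℝ → ℝ be a bounded, measurable, integrable and square-integrable kernel. Then the integrated variance of the sliding-window kernel density estimator satisfies ∫_ℝ Var(ĥ(x)) dx ≤ Σ_{i=1}^T α_i²·R(K)/(n_i·σ_i). -/

import Mathlib

open MeasureTheory ProbabilityTheory Filter Real

/-- The rescaled kernel `K_σ(x) = (1/σ)·K(x/σ)`. -/
noncomputable def scaledKernel (K : ℝ → ℝ) (σ : ℝ) : ℝ → ℝ := fun u => (1 / σ) * K (u / σ)

/-- `R(f) = ∫ f(x)² dx`. -/
noncomputable def Rquad (f : ℝ → ℝ) : ℝ := ∫ x : ℝ, (f x) ^ 2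

lemma scaledKernel_measurable {K : ℝ → ℝ} (hK : Measurable K) (σ : ℝ) :
    Measurable (scaledKernel K σ) :=
  (hK.comp (measurable_id.div_const σ)).const_mul _

lemma scaledKernel_sq_eq {K : ℝ → ℝ} (σ : ℝ) :
    (fun u => (scaledKernel K σ u) ^ 2) = fun u => (1/σ)^2 * (K (u/σ))^2 := by
  funext u; simp [scaledKernel, mul_pow]

lemma scaledKernel_sq_integrable {K : ℝ → ℝ} (hKsq : Integrable (fun x => (K x) ^ 2))
    {σ : ℝ} (hσ : 0 < σ) : Integrable (fun u => (scaledKernel K σ u) ^ 2) := by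
  rw [scaledKernel_sq_eq]
  exact (hKsq.comp_div hσ.ne').const_mul _

lemma scaledKernel_sq_integral {K : ℝ → ℝ} (hKsq : Integrable (fun x => (K x) ^ 2))
    {σ : ℝ} (hσ : 0 < σ) : ∫ u, (scaledKernel K σ u) ^ 2 = Rquad K / σ := by
  rw [scaledKernel_sq_eq, integral_const_mul,
    MeasureTheory.Measure.integral_comp_div (fun t => (K t) ^ 2) σ,
    abs_of_pos hσ, smul_eq_mul, Rquad]
  field_simp

lemma scaledKernel_abs_le {K : ℝ → ℝ} {C : ℝ} (hC : ∀ x, |K x| ≤ C) {σ : ℝ} (hσ : 0 < σ)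
    (u : ℝ) : |scaledKernel K σ u| ≤ C / σ := by
  rw [scaledKernel]
  rw [abs_mul, abs_of_pos (by positivity : (0:ℝ) < 1/σ)]
  have h := mul_le_mul_of_nonneg_left (hC (u/σ)) (by positivity : (0:ℝ) ≤ 1/σ)
  calc 1/σ * |K (u/σ)| ≤ 1/σ * C := h
    _ = C / σ := by ring

lemma key_lintegral {K : ℝ → ℝ} (hKmeas : Measurable K)
    (hKsq : Integrable (fun x => (K x) ^ 2))
    {σ : ℝ} (hσ : 0 < σ) {p : ℝ → ℝ} (hp : Measurable p)
    (hp1 : ∫⁻ y, ENNReal.ofReal (p y) = 1) :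
    ∫⁻ x, ∫⁻ y, ENNReal.ofReal (p y) * ENNReal.ofReal ((scaledKernel K σ (x - y)) ^ 2)
      = ENNReal.ofReal (Rquad K / σ) := by
  have hskm : Measurable (scaledKernel K σ) := scaledKernel_measurable hKmeas σ
  have hF : Measurable (Function.uncurry fun x y : ℝ =>
      ENNReal.ofReal (p y) * ENNReal.ofReal ((scaledKernel K σ (x - y)) ^ 2)) := by
    apply Measurable.mul (f := fun z : ℝ × ℝ => ENNReal.ofReal (p z.2)) (g := fun z : ℝ × ℝ => ENNReal.ofReal ((scaledKernel K σ (z.1 - z.2)) ^ 2))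
    · exact ENNReal.measurable_ofReal.comp (hp.comp measurable_snd)
    · exact ENNReal.measurable_ofReal.comp
        ((hskm.comp (measurable_fst.sub measurable_snd)).pow_const 2)
  rw [lintegral_lintegral_swap hF.aemeasurable]
  have inner : ∀ y : ℝ, ∫⁻ x, ENNReal.ofReal ((scaledKernel K σ (x - y)) ^ 2)
      = ENNReal.ofReal (Rquad K / σ) := by
    intro y
    have h1 : ∫⁻ x, ENNReal.ofReal ((scaledKernel K σ (x - y)) ^ 2)
        = ∫⁻ x, ENNReal.ofReal ((scaledKernel K σ x) ^ 2) :=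
      (measurePreserving_sub_right volume y).lintegral_comp
        (ENNReal.measurable_ofReal.comp (hskm.pow_const 2))
    rw [h1, ← ofReal_integral_eq_lintegral_ofReal (scaledKernel_sq_integrable hKsq hσ)
      (Eventually.of_forall fun x => sq_nonneg _), scaledKernel_sq_integral hKsq hσ]
  calc ∫⁻ y, ∫⁻ x, ENNReal.ofReal (p y) * ENNReal.ofReal ((scaledKernel K σ (x - y)) ^ 2)
      = ∫⁻ y, ENNReal.ofReal (p y) * ENNReal.ofReal (Rquad K / σ) := by
        refine lintegral_congr fun y => ?_
        have hm : Measurable fun x : ℝ => ENNReal.ofReal (scaledKernel K σ (x - y) ^ 2) :=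
          ENNReal.measurable_ofReal.comp ((hskm.comp (measurable_id.sub_const y)).pow_const 2)
        rw [lintegral_const_mul _ hm, inner y]
    _ = ENNReal.ofReal (Rquad K / σ) := by
        have hm : Measurable fun y : ℝ => ENNReal.ofReal (p y) :=
          ENNReal.measurable_ofReal.comp hp
        rw [lintegral_mul_const _ hm, hp1, one_mul]

/-- **Integrated variance bound for the sliding-window kernel density estimator**:
`∫ Var(ĥ(x)) dx ≤ Σ_i α_i²·R(K)/(n_i·σ_i)`. -/
theorem sliding_window_integrated_variance_le
    {Ω : Type*} [MeasurableSpace Ω] (μ : Measure Ω) [IsProbabilityMeasure μ]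
    (T : ℕ) (hT : 0 < T)
    (nb : Fin T → ℕ) (hnb : ∀ i, 0 < nb i)
    (p : Fin T → ℝ → ℝ) (hpmeas : ∀ i, Measurable (p i))
    (X : (i : Fin T) → Fin (nb i) → Ω → ℝ)
    (hXmeas : ∀ i j, Measurable (X i j))
    (hindep : iIndepFun
      (fun q : (i : Fin T) × Fin (nb i) => X q.1 q.2) μ)
    (hdist : ∀ i j, Measure.map (X i j) μ
      = volume.withDensity (fun x => ENNReal.ofReal (p i x)))
    (hppos : ∀ i x, 0 ≤ p i x) (hpint : ∀ i, ∫ x : ℝ, p i x = 1)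
    -- the kernel: bounded, measurable, integrable and square-integrable
    (K : ℝ → ℝ) (hKmeas : Measurable K) (hKbdd : ∃ C, ∀ x, |K x| ≤ C)
    (hKint : Integrable K) (hKsq : Integrable (fun x => (K x) ^ 2))
    (σ : Fin T → ℝ) (hσ : ∀ i, 0 < σ i)
    (α : Fin T → ℝ) (hα : ∀ i, 0 ≤ α i) (hαsum : ∑ i, α i = 1)
    (hhat : ℝ → Ω → ℝ)
    (hhat_def : ∀ x ω, hhat x ω
      = ∑ i, α i * ((nb i : ℝ)⁻¹ * ∑ j, scaledKernel K (σ i) (x - X i j ω))) :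
    (∫ x : ℝ, variance (fun ω => hhat x ω) μ)
      ≤ ∑ i, (α i) ^ 2 * Rquad K / ((nb i : ℝ) * σ i) := by
  classical
  obtain ⟨C, hC⟩ := hKbdd
  -- the densities integrate (lintegral) to 1
  have hp1 : ∀ i, ∫⁻ y, ENNReal.ofReal (p i y) = 1 := by
    intro i
    have j : Fin (nb i) := ⟨0, hnb i⟩
    have h1 : (Measure.map (X i j) μ) Set.univ = 1 := by
      rw [Measure.map_apply (hXmeas i j) MeasurableSet.univ]; simp
    rw [hdist i j] at h1
    rwa [withDensity_apply _ MeasurableSet.univ, setLIntegral_univ] at h1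
  -- the dominating function
  set ℓ : Fin T → ℝ → ENNReal := fun i x =>
    ∫⁻ y, ENNReal.ofReal (p i y) * ENNReal.ofReal ((scaledKernel K (σ i) (x - y)) ^ 2) with hℓ
  have hℓmeas : ∀ i, Measurable (ℓ i) := by
    intro i
    apply Measurable.lintegral_prod_right
    apply Measurable.mul (f := fun z : ℝ × ℝ => ENNReal.ofReal (p i z.2)) (g := fun z : ℝ × ℝ => ENNReal.ofReal ((scaledKernel K (σ i) (z.1 - z.2)) ^ 2))
    · exact ENNReal.measurable_ofReal.comp ((hpmeas i).comp measurable_snd)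
    · exact ENNReal.measurable_ofReal.comp
        (((scaledKernel_measurable hKmeas (σ i)).comp
          (measurable_fst.sub measurable_snd)).pow_const 2)
  have hℓlint : ∀ i, ∫⁻ x, ℓ i x = ENNReal.ofReal (Rquad K / σ i) := fun i =>
    key_lintegral hKmeas hKsq (hσ i) (hpmeas i) (hp1 i)
  have hRnn : 0 ≤ Rquad K := integral_nonneg fun x => sq_nonneg _
  have hℓInt : ∀ i, Integrable (fun x => (ℓ i x).toReal) := by
    intro i
    apply integrable_toReal_of_lintegral_ne_top (hℓmeas i).aemeasurable
    rw [hℓlint i]; exact ENNReal.ofReal_ne_top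
  have hℓintegral : ∀ i, ∫ x, (ℓ i x).toReal = Rquad K / σ i := by
    intro i
    rw [integral_toReal (hℓmeas i).aemeasurable, hℓlint i,
      ENNReal.toReal_ofReal (div_nonneg hRnn (hσ i).le)]
    exact ae_lt_top (hℓmeas i) (by rw [hℓlint i]; exact ENNReal.ofReal_ne_top)
  -- second moment of each kernel term
  have hEY : ∀ (i : Fin T) (j : Fin (nb i)) (x : ℝ),
      ∫ ω, (scaledKernel K (σ i) (x - X i j ω)) ^ 2 ∂μ = (ℓ i x).toReal := by
    intro i j x
    have hgm : Measurable fun t : ℝ => (scaledKernel K (σ i) (x - t)) ^ 2 :=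
      ((scaledKernel_measurable hKmeas (σ i)).comp
        (measurable_const.sub measurable_id)).pow_const 2
    have hYm : Measurable fun ω => (scaledKernel K (σ i) (x - X i j ω)) ^ 2 :=
      hgm.comp (hXmeas i j)
    have hbound : ∀ ω, ‖(scaledKernel K (σ i) (x - X i j ω)) ^ 2‖ ≤ (C / σ i) ^ 2 := by
      intro ω
      rw [Real.norm_eq_abs, abs_pow]
      exact pow_le_pow_left₀ (abs_nonneg _) (scaledKernel_abs_le hC (hσ i) _) 2
    have hint : Integrable (fun ω => (scaledKernel K (σ i) (x - X i j ω)) ^ 2) μ :=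
      memLp_one_iff_integrable.mp
        (MemLp.of_bound hYm.aestronglyMeasurable _ (ae_of_all _ hbound))
    have h1 : ENNReal.ofReal (∫ ω, (scaledKernel K (σ i) (x - X i j ω)) ^ 2 ∂μ)
        = ∫⁻ ω, ENNReal.ofReal ((scaledKernel K (σ i) (x - X i j ω)) ^ 2) ∂μ :=
      ofReal_integral_eq_lintegral_ofReal hint (ae_of_all _ fun ω => sq_nonneg _)
    have h2 : ∫⁻ ω, ENNReal.ofReal ((scaledKernel K (σ i) (x - X i j ω)) ^ 2) ∂μ = ℓ i x := by
      have h3 : ∫⁻ ω, ENNReal.ofReal ((scaledKernel K (σ i) (x - X i j ω)) ^ 2) ∂μ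
          = ∫⁻ t, ENNReal.ofReal ((scaledKernel K (σ i) (x - t)) ^ 2)
              ∂(Measure.map (X i j) μ) :=
        (lintegral_map (ENNReal.measurable_ofReal.comp hgm) (hXmeas i j)).symm
      have hpm' : Measurable fun y : ℝ => ENNReal.ofReal (p i y) :=
        ENNReal.measurable_ofReal.comp (hpmeas i)
      have hgm' : Measurable fun t : ℝ => ENNReal.ofReal (scaledKernel K (σ i) (x - t) ^ 2) :=
        ENNReal.measurable_ofReal.comp hgm
      rw [h3, hdist i j, lintegral_withDensity_eq_lintegral_mul _ hpm' hgm']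
      rfl
    have h4 := congrArg ENNReal.toReal (h1.trans h2)
    rwa [ENNReal.toReal_ofReal (integral_nonneg fun ω => sq_nonneg _)] at h4
  -- pointwise variance bound
  have hvar : ∀ x : ℝ, variance (fun ω => hhat x ω) μ
      ≤ ∑ q : (i : Fin T) × Fin (nb i),
          (α q.1 * (nb q.1 : ℝ)⁻¹) ^ 2 * (ℓ q.1 x).toReal := by
    intro x
    set Z : ((i : Fin T) × Fin (nb i)) → Ω → ℝ := fun q ω =>
      (α q.1 * (nb q.1 : ℝ)⁻¹) * scaledKernel K (σ q.1) (x - X q.1 q.2 ω) with hZ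
    have hZmeas : ∀ q, Measurable (Z q) := fun q =>
      ((((scaledKernel_measurable hKmeas (σ q.1)).comp
        (measurable_const.sub measurable_id)).comp (hXmeas q.1 q.2)).const_mul _)
    have hsum_rw : (fun ω => hhat x ω) = ∑ q : (i : Fin T) × Fin (nb i), Z q := by
      funext ω
      rw [Finset.sum_apply, hhat_def x ω, ← Finset.univ_sigma_univ, Finset.sum_sigma]
      refine Finset.sum_congr rfl fun i _ => ?_
      simp only [hZ]
      rw [← mul_assoc, Finset.mul_sum]
    have hZmem : ∀ q, MemLp (Z q) 2 μ := by
      intro q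
      refine MemLp.of_bound (hZmeas q).aestronglyMeasurable
        (|α q.1 * (nb q.1 : ℝ)⁻¹| * (C / σ q.1)) (ae_of_all _ fun ω => ?_)
      simp only [hZ]
      rw [Real.norm_eq_abs, abs_mul]
      exact mul_le_mul_of_nonneg_left (scaledKernel_abs_le hC (hσ q.1) _) (abs_nonneg _)
    have hindep' : iIndepFun Z μ := by
      have h := hindep.comp
        (fun q => fun t : ℝ => (α q.1 * (nb q.1 : ℝ)⁻¹) * scaledKernel K (σ q.1) (x - t))
        (fun q => (((scaledKernel_measurable hKmeas (σ q.1)).comp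
          (measurable_const.sub measurable_id)).const_mul _))
      exact h
    have hpair : Set.Pairwise ↑(Finset.univ : Finset ((i : Fin T) × Fin (nb i)))
        (fun q r => IndepFun (Z q) (Z r) μ) := fun q _ r _ hqr => hindep'.indepFun hqr
    calc variance (fun ω => hhat x ω) μ
        = ∑ q : (i : Fin T) × Fin (nb i), variance (Z q) μ := by
          rw [hsum_rw]; exact IndepFun.variance_sum (fun q _ => hZmem q) hpair
      _ ≤ ∑ q : (i : Fin T) × Fin (nb i), (α q.1 * (nb q.1 : ℝ)⁻¹) ^ 2 * (ℓ q.1 x).toReal := by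
          refine Finset.sum_le_sum fun q _ => ?_
          have h5 : variance (Z q) μ = (α q.1 * (nb q.1 : ℝ)⁻¹) ^ 2
              * variance (fun ω => scaledKernel K (σ q.1) (x - X q.1 q.2 ω)) μ :=
            variance_const_mul _ _ μ
          rw [h5]
          refine mul_le_mul_of_nonneg_left ?_ (sq_nonneg _)
          have h6 := variance_le_expectation_sq (μ := μ)
            (X := fun ω => scaledKernel K (σ q.1) (x - X q.1 q.2 ω))
            ((((scaledKernel_measurable hKmeas (σ q.1)).comp
              (measurable_const.sub measurable_id)).comp (hXmeas q.1 q.2)).aestronglyMeasurable)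
          have h7 : (μ[(fun ω => scaledKernel K (σ q.1) (x - X q.1 q.2 ω)) ^ 2] : ℝ)
              = (ℓ q.1 x).toReal := by
            rw [← hEY q.1 q.2 x]; rfl
          exact h6.trans_eq h7
  -- assemble
  have hBint : Integrable (fun x => ∑ q : (i : Fin T) × Fin (nb i),
      (α q.1 * (nb q.1 : ℝ)⁻¹) ^ 2 * (ℓ q.1 x).toReal) :=
    integrable_finset_sum _ fun q _ => (hℓInt q.1).const_mul _
  refine le_trans (integral_mono_of_nonneg (ae_of_all _ fun x => variance_nonneg _ _)
    hBint (ae_of_all _ hvar)) ?_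
  rw [integral_finset_sum _ fun q _ => (hℓInt q.1).const_mul _]
  have hq : ∀ q : (i : Fin T) × Fin (nb i),
      (∫ x : ℝ, (α q.1 * (nb q.1 : ℝ)⁻¹) ^ 2 * (ℓ q.1 x).toReal)
        = (α q.1 * (nb q.1 : ℝ)⁻¹) ^ 2 * (Rquad K / σ q.1) := by
    intro q; rw [integral_const_mul, hℓintegral q.1]
  rw [Finset.sum_congr rfl fun q _ => hq q, ← Finset.univ_sigma_univ, Finset.sum_sigma]
  refine le_of_eq (Finset.sum_congr rfl fun i _ => ?_)
  simp only [Finset.sum_const, Finset.card_univ, Fintype.card_fin, nsmul_eq_mul]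
  have hn : (nb i : ℝ) ≠ 0 := Nat.cast_ne_zero.mpr (hnb i).ne'
  have hs : σ i ≠ 0 := (hσ i).ne'
  field_simp
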